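/- Let G be a graph that is (ε, s, D)-typical with respect to a vertex partition (V_1,...,V_t) with dn ≤ |V_i| ≤ n for all i and D ≥ d·I for an indicator matrix I. Let L be a graph on V(G) with Δ(L) ≤ γn such that L[V_i,V_j] is nonempty only when G[V_i,V_j] is nonempty. Then the symmetric difference G △ L is (ε + sγd^{-s-1}, s, D)-typical. -/

import Mathlib

open Finset

/-- `G` is `(ε,s,D)`-typical with respect to the vertex partition `Vp` (with assignment
`τ`): for every set `S` of at most `s` vertices and every class `i`,
`|V_i ∩ ⋂_{v∈S} N(v)| = (1±ε)|V_i|∏_{v∈S} D_{τ(v),i}`. -/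
def IsTypical {V : Type*} (G : SimpleGraph V) {t : ℕ} (Vp : Fin t → Set V)
    (τ : V → Fin t) (ε : ℝ) (s : ℕ) (D : Fin t → Fin t → ℝ) : Prop :=
  ∀ S : Finset V, S.card ≤ s → ∀ i : Fin t,
    |(((Vp i) ∩ ⋂ v ∈ S, G.neighborSet v).ncard : ℝ) -
        ((Vp i).ncard : ℝ) * ∏ v ∈ S, D (τ v) i| ≤
      ε * ((Vp i).ncard : ℝ) * ∏ v ∈ S, D (τ v) i

/-- Typicality is robust under removing/adding a sparse graph `L`: if `G` is
`(ε,s,D)`-typical, `Δ(L) ≤ γn`, and `L` has edges between `V_i` and `V_j` only when `G`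
does, then `G △ L` is `(ε + sγd^{-s-1}, s, D)`-typical. -/
theorem stmt_15 {V : Type*} [Fintype V] (G L : SimpleGraph V) (t : ℕ)
    (Vp : Fin t → Set V) (τ : V → Fin t) (hτ : ∀ v, v ∈ Vp (τ v))
    (hpart : ∀ i j, i ≠ j → Disjoint (Vp i) (Vp j))
    (ε γ d : ℝ) (s n : ℕ) (hε : 0 < ε) (hγ : 0 < γ) (hd : 0 < d) (hd1 : d ≤ 1)
    (D : Fin t → Fin t → ℝ) (hDsymm : ∀ i j, D i j = D j i)
    (hD01 : ∀ i j, 0 ≤ D i j ∧ D i j ≤ 1)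
    (hDI : ∀ i j, D i j = 0 ∨ d ≤ D i j)
    (hsize : ∀ i, d * n ≤ ((Vp i).ncard : ℝ) ∧ (Vp i).ncard ≤ n)
    (htyp : IsTypical G Vp τ ε s D)
    (hΔ : ∀ v, ((L.neighborSet v).ncard : ℝ) ≤ γ * n)
    (hLG : ∀ i j, (∃ x ∈ Vp i, ∃ y ∈ Vp j, L.Adj x y) →
      ∃ x ∈ Vp i, ∃ y ∈ Vp j, G.Adj x y) :
    IsTypical (symmDiff G L) Vp τ (ε + s * γ * d ^ (-(s : ℤ) - 1)) s D := by
  classical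
  intro S hS i
  set A := Vp i ∩ ⋂ v ∈ S, G.neighborSet v with hAdef
  set B := Vp i ∩ ⋂ v ∈ S, (symmDiff G L).neighborSet v with hBdef
  set c : ℝ := ((Vp i).ncard : ℝ) with hcdef
  have hc0 : (0:ℝ) ≤ c := Nat.cast_nonneg _
  by_cases hdeg : ∀ v ∈ S, d ≤ D (τ v) i
  · -- main case: all densities at least d
    have hprodge : d ^ s ≤ ∏ v ∈ S, D (τ v) i := by
      calc d ^ s ≤ d ^ S.card := pow_le_pow_of_le_one hd.le hd1 hS
        _ = ∏ _v ∈ S, d := (Finset.prod_const d).symm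
        _ ≤ ∏ v ∈ S, D (τ v) i :=
            Finset.prod_le_prod (fun v _ => hd.le) (fun v hv => hdeg v hv)
    set P : ℝ := ∏ v ∈ S, D (τ v) i with hPdef
    set U : Finset V := S.biUnion fun v => (L.neighborSet v).toFinite.toFinset with hUdef
    have hBA : B ⊆ A ∪ ↑U := by
      intro u hu
      by_cases hGu : ∀ v ∈ S, G.Adj v u
      · exact Or.inl ⟨hu.1, Set.mem_iInter₂.2 fun v hv => hGu v hv⟩
      · right
        push_neg at hGu
        obtain ⟨v, hv, hGvu⟩ := hGu
        have hm := Set.mem_iInter₂.1 hu.2 v hv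
        simp only [SimpleGraph.mem_neighborSet, symmDiff_def, SimpleGraph.sup_adj,
          SimpleGraph.sdiff_adj] at hm
        rcases hm with h | h
        · exact absurd h.1 hGvu
        · exact Finset.mem_coe.2 (Finset.mem_biUnion.2 ⟨v, hv, (Set.Finite.mem_toFinset _).2 h.1⟩)
    have hAB : A ⊆ B ∪ ↑U := by
      intro u hu
      by_cases hGu : ∀ v ∈ S, (symmDiff G L).Adj v u
      · exact Or.inl ⟨hu.1, Set.mem_iInter₂.2 fun v hv => hGu v hv⟩
      · right
        push_neg at hGu
        obtain ⟨v, hv, hGvu⟩ := hGu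
        have hG : G.Adj v u := Set.mem_iInter₂.1 hu.2 v hv
        have hL : L.Adj v u := by
          by_contra hL
          exact hGvu (by simp [symmDiff_def, hG, hL])
        exact Finset.mem_coe.2 (Finset.mem_biUnion.2 ⟨v, hv, (Set.Finite.mem_toFinset _).2 hL⟩)
    have hU : (U.card : ℝ) ≤ s * γ * n := by
      calc (U.card : ℝ) ≤ ∑ v ∈ S, ((L.neighborSet v).toFinite.toFinset.card : ℝ) := by
            exact_mod_cast Finset.card_biUnion_le
        _ ≤ ∑ _v ∈ S, γ * n := Finset.sum_le_sum fun v _ => by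
            rw [← Set.ncard_eq_toFinset_card _ (L.neighborSet v).toFinite]; exact hΔ v
        _ = S.card * (γ * n) := by rw [Finset.sum_const, nsmul_eq_mul]
        _ ≤ s * (γ * n) := by
            have : (S.card : ℝ) ≤ s := by exact_mod_cast hS
            apply mul_le_mul_of_nonneg_right this (by positivity)
        _ = s * γ * n := by ring
    have hcard : |((B.ncard : ℝ)) - (A.ncard : ℝ)| ≤ s * γ * n := by
      have h1 : B.ncard ≤ A.ncard + U.card := by
        calc B.ncard ≤ (A ∪ ↑U).ncard := Set.ncard_le_ncard hBA (Set.toFinite _)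
          _ ≤ A.ncard + (↑U : Set V).ncard := Set.ncard_union_le _ _
          _ = A.ncard + U.card := by rw [Set.ncard_coe_finset]
      have h2 : A.ncard ≤ B.ncard + U.card := by
        calc A.ncard ≤ (B ∪ ↑U).ncard := Set.ncard_le_ncard hAB (Set.toFinite _)
          _ ≤ B.ncard + (↑U : Set V).ncard := Set.ncard_union_le _ _
          _ = B.ncard + U.card := by rw [Set.ncard_coe_finset]
      have h1' : (B.ncard : ℝ) ≤ A.ncard + U.card := by exact_mod_cast h1
      have h2' : (A.ncard : ℝ) ≤ B.ncard + U.card := by exact_mod_cast h2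
      rw [abs_sub_le_iff]
      constructor <;> linarith
    have htypS := htyp S hS i
    have hzpow : d ^ (-(s:ℤ) - 1) = (d ^ (s+1))⁻¹ := by
      rw [show (-(s:ℤ) - 1) = -((s+1 : ℕ) : ℤ) by push_cast; ring, zpow_neg, zpow_natCast]
    have hpow : (0:ℝ) < d ^ (s+1) := pow_pos hd _
    have hlb : d ^ (s+1) * n ≤ c * P := by
      have h1 := (hsize i).1
      have h2 : (0:ℝ) ≤ d ^ s := by positivity
      calc d ^ (s+1) * n = (d * n) * d ^ s := by ring
        _ ≤ c * d ^ s := mul_le_mul_of_nonneg_right h1 h2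
        _ ≤ c * P := mul_le_mul_of_nonneg_left hprodge hc0
    have hkey : (s:ℝ) * γ * n ≤ s * γ * d ^ (-(s:ℤ) - 1) * (c * P) := by
      rw [hzpow]
      have h3 : (n:ℝ) ≤ (d ^ (s+1))⁻¹ * (c * P) := by
        rw [le_inv_mul_iff₀ hpow]; exact hlb
      calc (s:ℝ) * γ * n ≤ s * γ * ((d ^ (s+1))⁻¹ * (c * P)) :=
            mul_le_mul_of_nonneg_left h3 (by positivity)
        _ = s * γ * (d ^ (s+1))⁻¹ * (c * P) := by ring
    calc |(B.ncard : ℝ) - c * P| ≤ |(B.ncard : ℝ) - (A.ncard : ℝ)| + |(A.ncard : ℝ) - c * P| :=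
          abs_sub_le _ _ _
      _ ≤ s * γ * n + ε * c * P := add_le_add hcard htypS
      _ ≤ s * γ * d ^ (-(s:ℤ) - 1) * (c * P) + ε * c * P := by linarith
      _ = (ε + s * γ * d ^ (-(s:ℤ) - 1)) * c * P := by ring
  · -- degenerate case: some density is zero
    push_neg at hdeg
    obtain ⟨v0, hv0, hv0d⟩ := hdeg
    have hD0 : D (τ v0) i = 0 := (hDI (τ v0) i).resolve_right (not_le.2 hv0d)
    have hs1 : 1 ≤ s := le_trans (Finset.one_le_card.2 ⟨v0, hv0⟩) hS
    have hempty : ∀ w, D (τ w) i = 0 → Vp i ∩ G.neighborSet w = ∅ := by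
      intro w hw
      have ht := htyp {w} (by simpa using hs1) i
      simp only [Finset.prod_singleton, Finset.set_biInter_singleton, hw, mul_zero,
        sub_zero] at ht
      have : ((Vp i ∩ G.neighborSet w).ncard : ℝ) = 0 := by
        have := abs_nonneg ((Vp i ∩ G.neighborSet w).ncard : ℝ)
        have habs : |((Vp i ∩ G.neighborSet w).ncard : ℝ)| = 0 := le_antisymm ht this
        simpa [abs_eq_zero] using habs
      rw [← Set.ncard_eq_zero (Set.toFinite _)]
      exact_mod_cast this
    have hP : ∏ v ∈ S, D (τ v) i = 0 := Finset.prod_eq_zero hv0 hD0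
    have hB : B = ∅ := by
      rw [Set.eq_empty_iff_forall_notMem]
      intro u hu
      have hadj := Set.mem_iInter₂.1 hu.2 v0 hv0
      simp only [SimpleGraph.mem_neighborSet, symmDiff_def, SimpleGraph.sup_adj,
        SimpleGraph.sdiff_adj] at hadj
      have hGL : G.Adj v0 u ∨ L.Adj v0 u := by tauto
      rcases hGL with hG | hL
      · have he := hempty v0 hD0
        have : u ∈ Vp i ∩ G.neighborSet v0 := ⟨hu.1, hG⟩
        rw [he] at this
        exact this
      · obtain ⟨x, hx, y, hy, hGxy⟩ := hLG (τ v0) i ⟨v0, hτ v0, u, hu.1, hL⟩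
        have hτx : τ x = τ v0 := by
          by_contra hne
          exact Set.disjoint_left.1 (hpart _ _ hne) (hτ x) hx
        have hDx : D (τ x) i = 0 := by rw [hτx]; exact hD0
        have he := hempty x hDx
        have : y ∈ Vp i ∩ G.neighborSet x := ⟨hy, hGxy⟩
        rw [he] at this
        exact this
    rw [hP, hB]
    simp
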